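/- Let L be a frame, r_1, …, r_n rationals, and a_1, …, a_n pairwise disjoint complemented elements of L. Let g := Σ_{i=1}^{n} r_i·χ_{a_i} with components (u_g, v_g). If g is nonnegative, i.e. v_g 0 = ⊥, then a_i = ⊥ for every i with r_i < 0. (This is the lattice content of the fact that for a nonnegative simple function represented with pairwise disjoint complemented congruences, the σ-sublocales attached to negative coefficients have measure zero: μ(S_i ∧ S) = 0 whenever r_i < 0.) -/

import Mathlib

/-- A pair of maps `u, v : ℚ → L`, encoding a real-valued function on the frame `L`
via `f(p,—) = u p`, `f(—,q) = v q`. -/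
structure MP (L : Type*) where
  u : ℚ → L
  v : ℚ → L

namespace MP

variable {L : Type*} [Order.Frame L]

/-- The order on pairs: `f ≤ g` iff `u_f p ≤ u_g p` and `v_g q ≤ v_f q` for all rationals. -/
def le (f g : MP L) : Prop :=
  (∀ p : ℚ, f.u p ≤ g.u p) ∧ (∀ q : ℚ, g.v q ≤ f.v q)

/-- The sum of two pairs. -/
noncomputable def add (f g : MP L) : MP L where
  u := fun p => ⨆ t : ℚ, f.u t ⊓ g.u (p - t)
  v := fun q => ⨆ t : ℚ, f.v t ⊓ g.v (q - t)

/-- The join of two pairs. -/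
def sup (f g : MP L) : MP L where
  u := fun p => f.u p ⊔ g.u p
  v := fun q => f.v q ⊓ g.v q

/-- The negation of a pair. -/
def neg (f : MP L) : MP L where
  u := fun p => f.v (-p)
  v := fun q => f.u (-q)

end MP

/-- The zero pair `𝟎`. -/
noncomputable def zeroMP (L : Type*) [Order.Frame L] : MP L where
  u := fun p => if p < 0 then ⊤ else ⊥
  v := fun q => if q ≤ 0 then ⊥ else ⊤

/-- The scaled characteristic pair `r·χ_a`, for a rational `r` and a complemented
element `a` with complement `ac`. -/
noncomputable def sChi {L : Type*} [Order.Frame L] (r : ℚ) (a ac : L) : MP L where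
  u := fun p =>
    if 0 < r then (if p < 0 then ⊤ else if p < r then a else ⊥)
    else if r = 0 then (if p < 0 then ⊤ else ⊥)
    else (if p < r then ⊤ else if p < 0 then ac else ⊥)
  v := fun q =>
    if 0 < r then (if q ≤ 0 then ⊥ else if q ≤ r then ac else ⊤)
    else if r = 0 then (if q ≤ 0 then ⊥ else ⊤)
    else (if q ≤ r then ⊥ else if q ≤ 0 then a else ⊤)

/-- Iterated sum of a finite list of pairs. -/
noncomputable def sumMP {L : Type*} [Order.Frame L] : List (MP L) → MP L
  | [] => zeroMP L
  | [f] => f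
  | f :: g :: fs => f.add (sumMP (g :: fs))


private lemma le_v_sum_ofFn {L : Type*} [Order.Frame L] :
    ∀ (n : ℕ) (f : Fin (n+1) → MP L) (t : Fin (n+1) → ℚ) (x : L),
      (∀ i, x ≤ (f i).v (t i)) → x ≤ (sumMP (List.ofFn f)).v (∑ i, t i) := by
  intro n
  induction n with
  | zero =>
    intro f t x hx
    simpa [List.ofFn_succ, sumMP, Fin.sum_univ_one] using hx 0
  | succ m ih =>
    intro f t x hx
    have hcons : List.ofFn f = f 0 :: List.ofFn (fun i : Fin (m+1) => f i.succ) :=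
      List.ofFn_succ
    have hcons2 : List.ofFn (fun i : Fin (m+1) => f i.succ)
        = f 1 :: List.ofFn (fun i : Fin m => f i.succ.succ) := by
      rw [List.ofFn_succ]; rfl
    have hsum : sumMP (List.ofFn f)
        = (f 0).add (sumMP (List.ofFn (fun i : Fin (m+1) => f i.succ))) := by
      rw [hcons, hcons2]; rfl
    have hrest : x ≤ (sumMP (List.ofFn (fun i : Fin (m+1) => f i.succ))).v
        (∑ i : Fin (m+1), t i.succ) := ih _ _ _ (fun i => hx i.succ)
    rw [hsum]
    show x ≤ ⨆ s : ℚ, (f 0).v s ⊓ _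
    refine le_trans ?_ (le_iSup _ (t 0))
    have : (∑ i : Fin (m+2), t i) - t 0 = ∑ i : Fin (m+1), t i.succ := by
      rw [Fin.sum_univ_succ]; ring
    rw [this]
    exact le_inf (hx 0) hrest

/-- If `g = Σ_{i=1}^{n} r_i·χ_{a_i}` with pairwise disjoint complemented `a_i` is
nonnegative (`v_g 0 = ⊥`), then `a_i = ⊥` whenever `r_i < 0`. -/
theorem nonneg_simple_neg_coeff_bot {L : Type*} [Order.Frame L]
    (n : ℕ) (r : Fin n → ℚ)
    (a ac : Fin n → L) (ha : ∀ i, IsCompl (a i) (ac i))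
    (hdisj : ∀ i j, i ≠ j → a i ⊓ a j = ⊥)
    (g : MP L) (hg : g = sumMP (List.ofFn fun i => sChi (r i) (a i) (ac i)))
    (hnn : g.v 0 = ⊥) :
    ∀ i, r i < 0 → a i = ⊥ := by
  subst hg
  intro i hri
  obtain ⟨m, rfl⟩ : ∃ m, n = m + 1 := ⟨n - 1, by have := i.pos; omega⟩
  set ε : ℚ := if m = 0 then 1 else -(r i) / (2 * m) with hεdef
  have hε : 0 < ε := by
    rw [hεdef]; split_ifs with h
    · norm_num
    · apply div_pos (by linarith) (by positivity)
  have hti1 : r i < -(m : ℚ) * ε := by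
    rcases Nat.eq_zero_or_pos m with h | h
    · subst h; simpa using hri
    · have hm : (m : ℚ) ≠ 0 := by exact_mod_cast h.ne'
      have : ε = -(r i) / (2 * m) := by rw [hεdef, if_neg h.ne']
      rw [this]
      have heq : -(m:ℚ) * (-(r i) / (2 * m)) = r i / 2 := by
        field_simp
      rw [heq]; linarith
  have hti2 : -(m : ℚ) * ε ≤ 0 := by
    have : (0:ℚ) ≤ m := by positivity
    nlinarith
  set t : Fin (m+1) → ℚ := fun j => if j = i then -(m:ℚ) * ε else ε with htdef
  have hsum0 : ∑ j, t j = 0 := by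
    rw [← Finset.sum_erase_add _ _ (Finset.mem_univ i)]
    have h1 : ∑ j ∈ Finset.univ.erase i, t j = ∑ j ∈ Finset.univ.erase i, ε := by
      apply Finset.sum_congr rfl
      intro j hj
      rw [htdef]; simp [Finset.ne_of_mem_erase hj]
    have h2 : t i = -(m:ℚ) * ε := by rw [htdef]; simp
    rw [h1, h2, Finset.sum_const, Finset.card_erase_of_mem (Finset.mem_univ i),
      Finset.card_univ, Fintype.card_fin]
    push_cast [nsmul_eq_mul]
    ring
  have hx : ∀ j, a i ≤ (sChi (r j) (a j) (ac j)).v (t j) := by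
    intro j
    by_cases hj : j = i
    · subst hj
      have ht : t j = -(m:ℚ) * ε := by rw [htdef]; simp
      rw [ht]
      have : (sChi (r j) (a j) (ac j)).v (-(m:ℚ) * ε) = a j := by
        simp only [sChi]
        rw [if_neg (not_lt.mpr hri.le), if_neg hri.ne, if_neg (not_le.mpr hti1),
          if_pos hti2]
      rw [this]
    · have ht : t j = ε := by rw [htdef]; simp [hj]
      rw [ht]
      have hij : a i ≤ ac j := by
        have hd : a i ⊓ a j = ⊥ := hdisj i j (fun h => hj h.symm)
        have := (ha j).sup_eq_top
        calc a i = a i ⊓ (a j ⊔ ac j) := by rw [this, inf_top_eq]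
        _ = (a i ⊓ a j) ⊔ (a i ⊓ ac j) := inf_sup_left _ _ _
        _ = a i ⊓ ac j := by rw [hd, bot_sup_eq]
        _ ≤ ac j := inf_le_right
      simp only [sChi]
      split_ifs with h1 h2 h3 h4 h5 h6 h7 <;>
        first
          | exact le_top
          | exact hij
          | (exfalso; linarith)
  have key := le_v_sum_ofFn m (fun j => sChi (r j) (a j) (ac j)) t (a i) hx
  rw [hsum0] at key
  exact le_bot_iff.mp (hnn ▸ key)
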